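/- arXiv:1010.1378 — 3 statements merged into one kernel-verified Lean document; each statement's English description precedes it below -/
import Mathlib

section
/- Let F9 be a finite field with 9 elements and let G = PGL_2(9) be the quotient of the general linear group GL_2(F9) by its center. Every element x of order 3 in G has centralizer C_G(x) isomorphic to C3 × C3. -/
lemma charP3 (F : Type) [Field F] [Fintype F] (hF : Fintype.card F = 9) : CharP F 3 := by
  obtain ⟨p, hp⟩ := CharP.exists F
  haveI := hp
  obtain ⟨n, hpp, hc⟩ := FiniteField.card F p
  have h9 : p ^ (n:ℕ) = 9 := by rw [← hc, hF]
  have hpdvd : p ∣ 9 := by rw [← h9]; exact dvd_pow_self p n.pos.ne'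
  have hple : p ≤ 9 := Nat.le_of_dvd (by norm_num) hpdvd
  have hp2 : 2 ≤ p := hpp.two_le
  have : p = 3 := by interval_cases p <;> revert hpdvd hpp <;> decide
  subst this; exact hp

noncomputable def addEquivF (F : Type) [Field F] [Fintype F] (hF : Fintype.card F = 9) :
    F ≃+ (ZMod 3 × ZMod 3) := by
  haveI : Fact (Nat.Prime 3) := ⟨by norm_num⟩
  haveI := charP3 F hF
  haveI : Algebra (ZMod 3) F := ZMod.algebra F 3
  have hfr : Module.finrank (ZMod 3) F = 2 := by
    have hcard := Module.card_fintype (Module.finBasis (ZMod 3) F)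
    rw [hF, ZMod.card, Fintype.card_fin] at hcard
    have h2 : (9:ℕ) = 3 ^ 2 := by norm_num
    rw [h2] at hcard
    exact (Nat.pow_right_injective (by norm_num) hcard).symm
  let b : Module.Basis (Fin 2) (ZMod 3) F := Module.Basis.reindex (Module.finBasis (ZMod 3) F) (finCongr hfr)
  exact (b.equivFun.toAddEquiv).trans
    { toEquiv := piFinTwoEquiv (fun _ => ZMod 3), map_add' := fun _ _ => rfl }
open Matrix

variable {F : Type} [Field F]

def unitU : GL (Fin 2) F :=
  ⟨!![1,1;0,1], !![1,-1;0,1], by ext i j; fin_cases i <;> fin_cases j <;>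
      simp [Matrix.mul_apply, Fin.sum_univ_two],
    by ext i j; fin_cases i <;> fin_cases j <;> simp [Matrix.mul_apply, Fin.sum_univ_two]⟩

def unitL : GL (Fin 2) F :=
  ⟨!![1,0;1,1], !![1,0;-1,1], by ext i j; fin_cases i <;> fin_cases j <;>
      simp [Matrix.mul_apply, Fin.sum_univ_two],
    by ext i j; fin_cases i <;> fin_cases j <;> simp [Matrix.mul_apply, Fin.sum_univ_two]⟩

lemma mem_center_iff' (A : GL (Fin 2) F) :
    A ∈ Subgroup.center (GL (Fin 2) F) ↔ ∃ c : F, (A : Matrix (Fin 2) (Fin 2) F) = c • 1 := by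
  constructor
  · intro hA
    have hU := congrArg (Units.val) ((Subgroup.mem_center_iff.mp hA) unitU)
    have hL := congrArg (Units.val) ((Subgroup.mem_center_iff.mp hA) unitL)
    simp only [Units.val_mul, unitU, unitL] at hU hL
    refine ⟨A.val 0 0, ?_⟩
    have h01 := congrFun (congrFun hU 0) 1
    have h10 := congrFun (congrFun hU 1) 0
    have h11 := congrFun (congrFun hU 1) 1
    have g01 := congrFun (congrFun hL 0) 1
    have g00 := congrFun (congrFun hL 0) 0
    simp [Matrix.mul_apply, Fin.sum_univ_two] at h01 h10 h11 g01 g00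
    ext i j
    fin_cases i <;> fin_cases j <;>
      simp [Matrix.one_apply] <;>
      first | exact g00 | exact h11 | linear_combination h01
  · rintro ⟨c, hc⟩
    refine Subgroup.mem_center_iff.mpr fun B => Units.ext ?_
    rw [Units.val_mul, Units.val_mul, hc, Matrix.smul_mul, Matrix.mul_smul, one_mul, mul_one]
open Matrix

variable {F : Type} [Field F]

lemma ch2 (M : Matrix (Fin 2) (Fin 2) F) :
    M * M = (Matrix.trace M) • M - (M.det) • 1 := by
  ext i j
  fin_cases i <;> fin_cases j <;>
    simp [Matrix.mul_apply, Fin.sum_univ_two, Matrix.trace_fin_two, Matrix.det_fin_two,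
      Matrix.one_apply] <;> ring

lemma commutant (N B : Matrix (Fin 2) (Fin 2) F) (hN : N ≠ 0)
    (htr : Matrix.trace N = 0) (hdet : N.det = 0) (hcomm : B * N = N * B) :
    ∃ α β : F, B = α • 1 + β • N := by
  have hN11 : N 1 1 = -N 0 0 := by
    rw [Matrix.trace_fin_two] at htr; linear_combination htr
  have hbc : N 0 1 * N 1 0 = -(N 0 0 * N 0 0) := by
    rw [Matrix.det_fin_two, hN11] at hdet; linear_combination -hdet
  have e00 := congrFun (congrFun hcomm 0) 0
  have e01 := congrFun (congrFun hcomm 0) 1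
  have e10 := congrFun (congrFun hcomm 1) 0
  have e11 := congrFun (congrFun hcomm 1) 1
  simp only [Matrix.mul_apply, Fin.sum_univ_two, hN11] at e00 e01 e10 e11
  by_cases hb : N 0 1 ≠ 0
  · refine ⟨B 0 0 - (B 0 1 / N 0 1) * N 0 0, B 0 1 / N 0 1, ?_⟩
    ext i j
    fin_cases i <;> fin_cases j
    · simp [Matrix.one_apply]
    · simp [Matrix.one_apply]; field_simp
    · simp [Matrix.one_apply]; field_simp; linear_combination -e00
    · simp [Matrix.one_apply, hN11]; field_simp; linear_combination -e01
  · push_neg at hb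
    have ha : N 0 0 = 0 := by
      have h2 : N 0 0 * N 0 0 = 0 := by rw [hb] at hbc; linear_combination hbc
      exact mul_self_eq_zero.mp h2
    have hc : N 1 0 ≠ 0 := by
      intro hc
      apply hN
      ext i j; fin_cases i <;> fin_cases j <;> simp [ha, hb, hc, hN11]
    refine ⟨B 0 0, B 1 0 / N 1 0, ?_⟩
    ext i j
    fin_cases i <;> fin_cases j
    · simp [Matrix.one_apply, ha]
    · simp [Matrix.one_apply, hb]
      rw [ha, hb] at e11; simp at e11
      rcases e11 with h | h
      · exact absurd h hc
      · exact h
    · simp [Matrix.one_apply]; field_simp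
    · simp [Matrix.one_apply, hN11, ha]
      rw [ha] at e10; simp at e10
      rcases mul_eq_mul_right_iff.mp (by linear_combination e10 : B 1 1 * N 1 0 = B 0 0 * N 1 0) with h | h
      · exact h
      · exact absurd h hc

open Matrix

section aux
variable {F : Type} [Field F]

lemma mul1 {N : Matrix (Fin 2) (Fin 2) F} (hNN : N * N = 0) (b c : F) :
    (1 + b • N) * (1 + c • N) = 1 + (b + c) • N := by
  simp only [mul_add, add_mul, one_mul, mul_one, Matrix.smul_mul, Matrix.mul_smul,
    smul_smul, hNN, smul_zero, add_smul]
  abel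

lemma det_aux {N : Matrix (Fin 2) (Fin 2) F} (htr : Matrix.trace N = 0) (hdet : N.det = 0)
    (α β : F) : (α • 1 + β • N).det = α ^ 2 := by
  rw [Matrix.trace_fin_two] at htr
  rw [Matrix.det_fin_two] at hdet ⊢
  simp only [Matrix.add_apply, Matrix.smul_apply, Matrix.one_apply, smul_eq_mul]
  norm_num
  linear_combination (β^2) * hdet + (α*β) * htr
end aux

section main
variable (F : Type) [Field F] [Fintype F]

theorem stmt_6' (hF : Fintype.card F = 9)
    (x : Matrix.GeneralLinearGroup (Fin 2) F ⧸
      Subgroup.center (Matrix.GeneralLinearGroup (Fin 2) F))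
    (hx : orderOf x = 3) :
    Nonempty (↥(Subgroup.centralizer {x}) ≃*
      Multiplicative (ZMod 3) × Multiplicative (ZMod 3)) := by
  haveI : Fact (Nat.Prime 3) := ⟨by norm_num⟩
  haveI hchar : CharP F 3 := charP3 F hF
  haveI : ExpChar F 3 := ExpChar.prime (Fact.out)
  obtain ⟨A₀, rfl⟩ := QuotientGroup.mk_surjective x
  set Z := Subgroup.center (GL (Fin 2) F) with hZ
  have hx3 : (QuotientGroup.mk A₀ : GL (Fin 2) F ⧸ Z) ^ 3 = 1 := by
    rw [← hx]; exact pow_orderOf_eq_one _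
  have hA03 : A₀ ^ 3 ∈ Z := by
    rwa [← QuotientGroup.mk_pow, QuotientGroup.eq_one_iff] at hx3
  obtain ⟨c, hc⟩ := (mem_center_iff' (A₀ ^ 3)).mp hA03
  have hone : (1 : Matrix (Fin 2) (Fin 2) F) ≠ 0 := one_ne_zero
  have hc0 : c ≠ 0 := by
    rintro rfl
    have h := (A₀ ^ 3).mul_inv
    rw [hc] at h
    simp only [zero_smul, Matrix.zero_mul, zero_mul] at h
    exact hone h.symm
  obtain ⟨d, hd⟩ : ∃ d : F, d ^ 3 = c := by
    have hsurj : Function.Surjective (frobenius F 3) :=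
      Finite.injective_iff_surjective.mp (frobenius F 3).injective
    obtain ⟨d, hd⟩ := hsurj c
    exact ⟨d, by rw [← hd, frobenius_def]⟩
  have hd0 : d ≠ 0 := by rintro rfl; rw [zero_pow (by norm_num)] at hd; exact hc0 hd.symm
  let du : GL (Fin 2) F := ⟨d • 1, d⁻¹ • 1, by
      rw [Matrix.smul_mul, Matrix.mul_smul, smul_smul, mul_inv_cancel₀ hd0, one_smul, one_mul], by
      rw [Matrix.smul_mul, Matrix.mul_smul, smul_smul, inv_mul_cancel₀ hd0, one_smul, one_mul]⟩
  have hduZ : du ∈ Z := (mem_center_iff' du).mpr ⟨d, rfl⟩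
  set A : GL (Fin 2) F := du⁻¹ * A₀ with hA
  have hmkA : (QuotientGroup.mk A : GL (Fin 2) F ⧸ Z) = QuotientGroup.mk A₀ := by
    rw [hA, QuotientGroup.mk_mul]
    have h1 : (QuotientGroup.mk du⁻¹ : GL (Fin 2) F ⧸ Z) = 1 := by
      rw [QuotientGroup.eq_one_iff]; exact Subgroup.inv_mem _ hduZ
    rw [h1, one_mul]
  have hcomm_du : ∀ g : GL (Fin 2) F, du * g = g * du :=
    fun g => (Subgroup.mem_center_iff.mp hduZ g).symm
  have hA3 : A ^ 3 = 1 := by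
    have hcmm : Commute du⁻¹ A₀ := Commute.inv_left (hcomm_du A₀)
    apply Units.ext
    have h1 : ((A ^ 3 : GL (Fin 2) F) : Matrix (Fin 2) (Fin 2) F)
        = ((du⁻¹) ^ 3 : GL (Fin 2) F) * ((A₀ ^ 3 : GL (Fin 2) F) : Matrix (Fin 2) (Fin 2) F) := by
      rw [hA, hcmm.mul_pow, Units.val_mul]
    rw [h1, hc]
    have h2 : (((du⁻¹) ^ 3 : GL (Fin 2) F) : Matrix (Fin 2) (Fin 2) F)
        = (d⁻¹) ^ 3 • (1 : Matrix (Fin 2) (Fin 2) F) := by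
      rw [Units.val_pow_eq_pow_val]
      show ((d⁻¹ • 1 : Matrix (Fin 2) (Fin 2) F)) ^ 3 = _
      rw [smul_pow, one_pow]
    rw [h2, Matrix.smul_mul, one_mul, smul_smul, Units.val_one]
    have : d⁻¹ ^ 3 * c = 1 := by
      rw [← hd]; field_simp
    rw [this, one_smul]
  -- nilpotent part
  set M : Matrix (Fin 2) (Fin 2) F := (A : Matrix (Fin 2) (Fin 2) F) with hM
  set N : Matrix (Fin 2) (Fin 2) F := M - 1 with hN
  have hMN : M = 1 + N := by rw [hN]; abel
  have hM3 : M ^ 3 = 1 := by rw [hM, ← Units.val_pow_eq_pow_val, hA3, Units.val_one]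
  have hxne1 : (QuotientGroup.mk A₀ : GL (Fin 2) F ⧸ Z) ≠ 1 := by
    intro h; rw [h, orderOf_one] at hx; norm_num at hx
  have hNne : N ≠ 0 := by
    intro h
    apply hxne1
    rw [← hmkA]
    have hA1 : A = 1 := Units.ext (by
      show M = 1
      rw [hN] at h; exact sub_eq_zero.mp h)
    rw [hA1]
    rfl
  have h3 : (3 : F) = 0 := by exact_mod_cast CharP.cast_eq_zero F 3
  have h3M : ∀ X : Matrix (Fin 2) (Fin 2) F, X + X + X = 0 := by
    intro X
    have hX : ((3:F)) • X = X + X + X := by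
      rw [show (3:F) = 1 + 1 + 1 by norm_num, add_smul, add_smul, one_smul]
    rw [← hX, h3, zero_smul]
  have hN3 : N ^ 3 = 0 := by
    have key : (M - 1) ^ 3 = M ^ 3 - 1 - (M * M + M * M + M * M) + (M + M + M) := by
      noncomm_ring
    rw [hN, key, hM3, h3M, h3M]
    abel
  have hdetN : N.det = 0 := by
    have h0 : N.det ^ 3 = 0 := by rw [← Matrix.det_pow, hN3]; simp
    exact pow_eq_zero_iff (n := 3) (by norm_num) |>.mp h0
  have hCH := ch2 N
  rw [hdetN, zero_smul, sub_zero] at hCH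
  have htrN : Matrix.trace N = 0 := by
    have hcube : N ^ 3 = (Matrix.trace N * Matrix.trace N) • N := by
      rw [pow_succ, pow_two, hCH, Matrix.smul_mul, hCH, smul_smul]
    rw [hN3] at hcube
    have h0 : Matrix.trace N * Matrix.trace N = 0 :=
      (smul_eq_zero.mp hcube.symm).resolve_right hNne
    exact mul_self_eq_zero.mp h0
  have hNN : N * N = 0 := by rw [hCH, htrN, zero_smul]
  have hMN1 : M = 1 + (1:F) • N := by rw [hMN, one_smul]
  -- the units 1 + b • N
  have huval : ∀ b : F, (1 + b • N) * (1 + (-b) • N) = 1 := by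
    intro b; rw [mul1 hNN]; simp
  let u : F → GL (Fin 2) F := fun b =>
    ⟨1 + b • N, 1 + (-b) • N, huval b, by rw [mul1 hNN]; simp⟩
  have humem : ∀ b : F, (QuotientGroup.mk (u b) : GL (Fin 2) F ⧸ Z) ∈
      Subgroup.centralizer {(QuotientGroup.mk A₀ : GL (Fin 2) F ⧸ Z)} := by
    intro b
    rw [Subgroup.mem_centralizer_singleton_iff, ← hmkA, ← QuotientGroup.mk_mul,
      ← QuotientGroup.mk_mul]
    congr 1
    apply Units.ext
    rw [Units.val_mul, Units.val_mul]
    show (1 + b • N) * M = M * (1 + b • N)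
    rw [hMN1, mul1 hNN, mul1 hNN, add_comm b 1]
  let ψ : Multiplicative F →* GL (Fin 2) F ⧸ Z :=
    MonoidHom.mk' (fun b => QuotientGroup.mk (u (Multiplicative.toAdd b)))
      (by
        intro a b
        have hu : u (Multiplicative.toAdd (a * b))
            = u (Multiplicative.toAdd a) * u (Multiplicative.toAdd b) := by
          apply Units.ext
          rw [Units.val_mul]
          show (1 + (Multiplicative.toAdd (a * b)) • N)
            = (1 + (Multiplicative.toAdd a) • N) * (1 + (Multiplicative.toAdd b) • N)
          rw [mul1 hNN]
          rfl
        show (QuotientGroup.mk (u (Multiplicative.toAdd (a * b))) : GL (Fin 2) F ⧸ Z) = _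
        rw [hu, QuotientGroup.mk_mul])
  let Ψ : Multiplicative F →* Subgroup.centralizer {(QuotientGroup.mk A₀ : GL (Fin 2) F ⧸ Z)} :=
    ψ.codRestrict _ (fun b => humem _)
  have hinj : Function.Injective Ψ := by
    rw [injective_iff_map_eq_one]
    intro b hb
    have hb' : ψ b = 1 := congrArg Subtype.val hb
    have hb'' : (QuotientGroup.mk (u (Multiplicative.toAdd b)) : GL (Fin 2) F ⧸ Z) = 1 := hb'
    have : u (Multiplicative.toAdd b) ∈ Z := by
      rwa [QuotientGroup.eq_one_iff] at hb''
    obtain ⟨e, he⟩ := (mem_center_iff' _).mp this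
    have he' : 1 + (Multiplicative.toAdd b) • N = e • 1 := he
    have h1 : (Multiplicative.toAdd b) • N = (e - 1) • (1 : Matrix (Fin 2) (Fin 2) F) := by
      rw [sub_smul, one_smul, ← he']; abel
    have h2 : ((e - 1) * (e - 1)) • (1 : Matrix (Fin 2) (Fin 2) F) = 0 := by
      have h := congrArg (fun X => X * X) h1
      simp only [Matrix.smul_mul, Matrix.mul_smul, smul_smul, hNN, smul_zero, one_mul,
        mul_one] at h
      exact h.symm
    have he1 : e = 1 := by
      have := (smul_eq_zero.mp h2).resolve_right hone
      have := mul_self_eq_zero.mp this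
      linear_combination this
    have hb0 : Multiplicative.toAdd b = 0 := by
      rw [he1, sub_self, zero_smul] at h1
      exact (smul_eq_zero.mp h1).resolve_right hNne
    have : b = Multiplicative.ofAdd 0 := by rw [← hb0]; rfl
    simpa using this
  have hsurj : Function.Surjective Ψ := by
    rintro ⟨y, hy⟩
    obtain ⟨B, rfl⟩ := QuotientGroup.mk_surjective y
    have hyc : QuotientGroup.mk B * QuotientGroup.mk A =
        QuotientGroup.mk A * (QuotientGroup.mk B : GL (Fin 2) F ⧸ Z) := by
      rw [hmkA]
      exact Subgroup.mem_centralizer_singleton_iff.mp hy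
    have hconj : (QuotientGroup.mk (B * A * B⁻¹) : GL (Fin 2) F ⧸ Z) = QuotientGroup.mk A := by
      rw [QuotientGroup.mk_mul, QuotientGroup.mk_mul, hyc, QuotientGroup.mk_inv]
      group
    have hmem : (B * A * B⁻¹)⁻¹ * A ∈ Z := QuotientGroup.eq.mp hconj
    obtain ⟨e, he⟩ := (mem_center_iff' _).mp hmem
    have h4 : (B * A * B⁻¹) * ((B * A * B⁻¹)⁻¹ * A) = A := by group
    have h5 : (A : Matrix (Fin 2) (Fin 2) F)
        = e • ((B * A * B⁻¹ : GL (Fin 2) F) : Matrix (Fin 2) (Fin 2) F) := by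
      conv_lhs => rw [← h4]
      rw [Units.val_mul, he, Matrix.mul_smul, mul_one]
    have htrA : Matrix.trace (A : Matrix (Fin 2) (Fin 2) F) = 2 := by
      rw [← hM, hMN, Matrix.trace_add, Matrix.trace_one, htrN]
      norm_num
    have htrconj : Matrix.trace ((B * A * B⁻¹ : GL (Fin 2) F) : Matrix (Fin 2) (Fin 2) F) = 2 := by
      rw [Units.val_mul, Units.val_mul, Matrix.trace_mul_comm, ← Matrix.mul_assoc]
      have : ((B⁻¹ : GL (Fin 2) F) : Matrix (Fin 2) (Fin 2) F) * (B : Matrix (Fin 2) (Fin 2) F)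
          = 1 := B.inv_mul
      rw [this, Matrix.one_mul, ← hM, htrA]
    have h2F : (2 : F) ≠ 0 := by
      intro h; have := (CharP.cast_eq_zero_iff F 3 2).mp h; norm_num at this
    have he1 : e = 1 := by
      have ht := congrArg Matrix.trace h5
      rw [htrA, Matrix.trace_smul, htrconj, smul_eq_mul] at ht
      have : e * 2 = 1 * 2 := by linear_combination -ht
      exact mul_right_cancel₀ h2F this
    have hunit1 : (B * A * B⁻¹)⁻¹ * A = 1 := Units.ext (by
      rw [he, he1, one_smul, Units.val_one])
    have hBAB : B * A * B⁻¹ = A := inv_mul_eq_one.mp hunit1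
    have hBA : A * B = B * A := by
      have h := congrArg (fun g => g * B) hBAB
      simp only [inv_mul_cancel_right] at h
      exact h.symm
    have hMB : M * (B : Matrix (Fin 2) (Fin 2) F) = (B : Matrix (Fin 2) (Fin 2) F) * M := by
      have := congrArg Units.val hBA
      rw [Units.val_mul, Units.val_mul] at this
      exact this
    have hNB : (B : Matrix (Fin 2) (Fin 2) F) * N = N * (B : Matrix (Fin 2) (Fin 2) F) := by
      rw [hN, Matrix.mul_sub, Matrix.sub_mul, Matrix.mul_one, Matrix.one_mul, hMB]
    obtain ⟨α, β, hαβ⟩ := commutant N (B : Matrix (Fin 2) (Fin 2) F) hNne htrN hdetN hNB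
    have hα : α ≠ 0 := by
      intro h0
      have hBu : IsUnit ((B : Matrix (Fin 2) (Fin 2) F)) := ⟨B, rfl⟩
      have hdetB : ((B : Matrix (Fin 2) (Fin 2) F)).det ≠ 0 :=
        IsUnit.ne_zero ((Matrix.isUnit_iff_isUnit_det _).mp hBu)
      rw [hαβ, det_aux htrN hdetN, h0] at hdetB
      simp at hdetB
    refine ⟨Multiplicative.ofAdd (β / α), ?_⟩
    apply Subtype.ext
    show (QuotientGroup.mk (u (β / α)) : GL (Fin 2) F ⧸ Z) = QuotientGroup.mk B
    let αu : GL (Fin 2) F := ⟨α • 1, α⁻¹ • 1, by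
        rw [Matrix.smul_mul, Matrix.mul_smul, smul_smul, mul_inv_cancel₀ hα, one_smul, one_mul], by
        rw [Matrix.smul_mul, Matrix.mul_smul, smul_smul, inv_mul_cancel₀ hα, one_smul, one_mul]⟩
    have hαuZ : αu ∈ Z := (mem_center_iff' αu).mpr ⟨α, rfl⟩
    have hBdec : B = αu * u (β / α) := by
      apply Units.ext
      rw [Units.val_mul]
      show (B : Matrix (Fin 2) (Fin 2) F) = (α • 1) * (1 + (β / α) • N)
      rw [hαβ, Matrix.smul_mul, one_mul, smul_add, smul_smul]
      congr 2
      field_simp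
    rw [hBdec, QuotientGroup.mk_mul,
      (QuotientGroup.eq_one_iff (αu : GL (Fin 2) F)).mpr hαuZ, one_mul]
  exact ⟨(MulEquiv.ofBijective Ψ ⟨hinj, hsurj⟩).symm.trans
    ((AddEquiv.toMultiplicative (addEquivF F hF)).trans (MulEquiv.prodMultiplicative (ZMod 3) (ZMod 3)))⟩
end main

/-- Every element of order 3 in `PGL₂(F₉)` (the quotient of `GL₂(F₉)` by its center)
has centralizer isomorphic to `C₃ × C₃`. -/
theorem stmt_6 (F : Type) [Field F] [Fintype F] (hF : Fintype.card F = 9)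
    (x : Matrix.GeneralLinearGroup (Fin 2) F ⧸
      Subgroup.center (Matrix.GeneralLinearGroup (Fin 2) F))
    (hx : orderOf x = 3) :
    Nonempty (↥(Subgroup.centralizer {x}) ≃*
      Multiplicative (ZMod 3) × Multiplicative (ZMod 3)) :=
  stmt_6' F hF x hx
end

section
/- Let F9 be a finite field with 9 elements, let G = PGL_2(9) be the quotient of GL_2(F9) by its center, and let P be a Sylow 3-subgroup of G. Then P is isomorphic to C3 × C3, and the automizer N_G(P)/C_G(P) is isomorphic to the cyclic group C8. -/
/-- The centralizer `C_G(P)`, viewed inside the normalizer `N_G(P)`, is a normal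
subgroup of `N_G(P)` (it is the kernel of the conjugation action `N_G(P) → Aut(P)`). -/
instance centralizer_subgroupOf_normalizer_normal {G : Type*} [Group G] (P : Subgroup G) :
    ((Subgroup.centralizer (P : Set G)).subgroupOf (Subgroup.normalizer (P : Set G))).Normal := by
  rw [← Subgroup.normalizerMonoidHom_ker]
  exact MonoidHom.normal_ker _

/-- The automizer `N_G(P) / C_G(P)` of a subgroup `P` of `G`. -/
abbrev automizer {G : Type*} [Group G] (P : Subgroup G) : Type _ :=
  (Subgroup.normalizer (P : Set G)) ⧸ (Subgroup.centralizer (P : Set G)).subgroupOf (Subgroup.normalizer (P : Set G))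

open Subgroup Matrix

/-- product splitting of Multiplicative -/
def multProdEquiv (M N : Type*) [AddMonoid M] [AddMonoid N] :
    Multiplicative (M × N) ≃* Multiplicative M × Multiplicative N where
  toFun x := (Multiplicative.ofAdd x.toAdd.1, Multiplicative.ofAdd x.toAdd.2)
  invFun p := Multiplicative.ofAdd (p.1.toAdd, p.2.toAdd)
  left_inv _ := rfl
  right_inv _ := rfl
  map_mul' _ _ := rfl

lemma centralizer_map_equiv {G : Type*} [Group G] (φ : G ≃* G) (Q : Subgroup G) :
    Subgroup.centralizer ((Q.map φ.toMonoidHom : Subgroup G) : Set G)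
      = (Subgroup.centralizer (Q : Set G)).map φ.toMonoidHom := by
  ext x
  simp only [mem_centralizer_iff, Subgroup.mem_map]
  constructor
  · intro h
    refine ⟨φ.symm x, ?_, by simp⟩
    intro y hy
    have := h (φ y) ⟨y, hy, rfl⟩
    have := congrArg φ.symm this
    simpa using this
  · rintro ⟨y, hy, rfl⟩ z hz
    obtain ⟨w, hw, rfl⟩ := hz
    have := hy w hw
    simpa [← _root_.map_mul] using congrArg φ this

/-- transport of the automizer along an automorphism -/
noncomputable def automizerCongr {G : Type*} [Group G] (φ : G ≃* G) (Q : Subgroup G) :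
    automizer Q ≃* automizer (Q.map φ.toMonoidHom) := by
  refine QuotientGroup.congr _ _
    ((φ.subgroupMap (Subgroup.normalizer (Q : Set G))).trans
      (MulEquiv.subgroupCongr (Subgroup.map_equiv_normalizer_eq Q φ))) ?_
  ext x
  rw [Subgroup.mem_map]
  simp only [mem_subgroupOf]
  constructor
  · rintro ⟨y, hy, rfl⟩
    rw [centralizer_map_equiv]
    exact ⟨↑y, hy, rfl⟩
  · intro hx
    rw [centralizer_map_equiv] at hx
    obtain ⟨y, hy, hyx⟩ := hx
    have hyn : y ∈ Subgroup.normalizer (Q : Set G) := by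
      have hx2 : (x : G) ∈ (Subgroup.normalizer (Q : Set G)).map φ.toMonoidHom := by
        rw [Subgroup.map_equiv_normalizer_eq Q φ]; exact x.2
      obtain ⟨w, hw, hwx⟩ := hx2
      have : w = y := φ.injective (show φ.toMonoidHom w = φ.toMonoidHom y by rw [hwx, hyx])
      exact this ▸ hw
    refine ⟨⟨y, hyn⟩, by simpa [mem_subgroupOf] using hy, ?_⟩
    apply Subtype.ext
    exact hyx

namespace PGL9

variable {F : Type} [Field F] [Fintype F]
set_option linter.unusedSectionVars false

local notation "R" => Matrix (Fin 2) (Fin 2) F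
local notation "G0" => Matrix.GeneralLinearGroup (Fin 2) F

def uu (a : F) : G0 :=
  ⟨!![1, a; 0, 1], !![1, -a; 0, 1],
   by ext i j; fin_cases i <;> fin_cases j <;>
      simp [Matrix.mul_apply, Fin.sum_univ_two, Matrix.one_apply],
   by ext i j; fin_cases i <;> fin_cases j <;>
      simp [Matrix.mul_apply, Fin.sum_univ_two, Matrix.one_apply]⟩

def ll (a : F) : G0 :=
  ⟨!![1, 0; a, 1], !![1, 0; -a, 1],
   by ext i j; fin_cases i <;> fin_cases j <;>
      simp [Matrix.mul_apply, Fin.sum_univ_two, Matrix.one_apply],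
   by ext i j; fin_cases i <;> fin_cases j <;>
      simp [Matrix.mul_apply, Fin.sum_univ_two, Matrix.one_apply]⟩

@[simp] lemma uu_val (a : F) : (uu a : R) = !![1, a; 0, 1] := rfl

def sHom : Fˣ →* G0 := Units.map (Matrix.scalar (Fin 2)).toMonoidHom

lemma sHom_val (c : Fˣ) : ((sHom c : G0) : R) = Matrix.scalar (Fin 2) (c : F) := rfl

lemma sHom_injective : Function.Injective (sHom (F := F)) := by
  intro a b h
  have := congrArg (fun M : G0 => ((M : R)) 0 0) h
  simp only [sHom_val, Matrix.scalar_apply, Matrix.diagonal_apply_eq] at this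
  exact Units.ext this

lemma center_eq : Subgroup.center G0 = (sHom (F := F)).range := by
  ext g
  constructor
  · intro hg
    rw [Subgroup.mem_center_iff] at hg
    have h1 := congrArg (Units.val) (hg (uu 1))
    have h2 := congrArg (Units.val) (hg (ll 1))
    simp only [Units.val_mul] at h1 h2
    have e01 := congrFun (congrFun h1 0) 1
    have e11 := congrFun (congrFun h1 1) 1
    have f10 := congrFun (congrFun h2 1) 0
    have f00 := congrFun (congrFun h2 0) 0
    simp [uu, ll, Matrix.mul_apply, Fin.sum_univ_two] at e01 e11 f10 f00
    have h11 : (g : R) 1 1 = (g : R) 0 0 := by linear_combination e01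
    have hd : IsUnit ((g : R).det) := (Matrix.isUnit_iff_isUnit_det _).1 g.isUnit
    rw [Matrix.det_fin_two, h11, f00, e11, zero_mul, sub_zero] at hd
    have hu : IsUnit ((g : R) 0 0) := isUnit_of_mul_isUnit_left hd
    refine ⟨hu.unit, Units.ext ?_⟩
    show Matrix.scalar (Fin 2) ((g : R) 0 0) = (g : R)
    ext i j
    fin_cases i <;> fin_cases j <;>
      simp [Matrix.scalar_apply, Matrix.diagonal, e11, f00, h11]
  · rintro ⟨c, rfl⟩
    rw [Subgroup.mem_center_iff]
    intro h
    apply Units.ext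
    simp only [Units.val_mul, sHom_val]
    exact (Matrix.scalar_commute (c : F) (fun r => mul_comm _ _) (h : R)).symm

def B : Subgroup G0 where
  carrier := {M : G0 | (M : R) 1 0 = 0}
  one_mem' := by show ((1 : G0) : R) 1 0 = 0; simp [Matrix.one_apply]
  mul_mem' := by
    intro a b ha hb
    show ((a * b : G0) : R) 1 0 = 0
    rw [Units.val_mul, Matrix.mul_apply]
    simp only [Set.mem_setOf_eq] at ha hb
    simp [Fin.sum_univ_two, ha, hb]
  inv_mem' := by
    intro a ha
    simp only [Set.mem_setOf_eq] at ha ⊢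
    rw [Matrix.coe_units_inv, Matrix.inv_def, Matrix.adjugate_fin_two]
    simp [ha]

def K : Subgroup G0 where
  carrier := {M : G0 | (M : R) 1 0 = 0 ∧ (M : R) 0 0 = (M : R) 1 1}
  one_mem' := by
    constructor <;> simp [show ((1 : G0) : R) = 1 from rfl, Matrix.one_apply]
  mul_mem' := by
    intro a b ha hb
    simp only [Set.mem_setOf_eq] at ha hb ⊢
    obtain ⟨ha1, ha2⟩ := ha; obtain ⟨hb1, hb2⟩ := hb
    constructor <;>
    · show ((a * b : G0) : R) _ _ = _
      rw [Units.val_mul]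
      simp [Matrix.mul_apply, Fin.sum_univ_two, ha1, hb1, ha2, hb2]
  inv_mem' := by
    intro a ha
    simp only [Set.mem_setOf_eq] at ha ⊢
    obtain ⟨ha1, ha2⟩ := ha
    rw [Matrix.coe_units_inv, Matrix.inv_def, Matrix.adjugate_fin_two]
    constructor <;> simp [ha1, ha2]

lemma mem_B {M : G0} : M ∈ B ↔ (M : R) 1 0 = 0 := Iff.rfl

lemma mem_K {M : G0} : M ∈ K ↔ (M : R) 1 0 = 0 ∧ (M : R) 0 0 = (M : R) 1 1 := Iff.rfl

lemma K_le_B : (K : Subgroup G0) ≤ B := fun _ h => h.1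

lemma uu_mem_K (a : F) : uu a ∈ (K : Subgroup G0) := by
  constructor <;> simp [uu]

lemma Z_le_K : Subgroup.center G0 ≤ K := by
  rw [center_eq]
  rintro _ ⟨c, rfl⟩
  constructor <;> simp [sHom_val, Matrix.scalar_apply, Matrix.diagonal]

def uHom : Multiplicative F →* G0 where
  toFun a := uu a.toAdd
  map_one' := by
    apply Units.ext
    show (!![1, (0:F); 0, 1] : R) = ((1 : G0) : R)
    ext i j
    fin_cases i <;> fin_cases j <;> simp [Matrix.one_apply]
  map_mul' a b := by
    apply Units.ext
    show (!![1, (a.toAdd + b.toAdd : F); 0, 1] : R) = _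
    rw [Units.val_mul]
    ext i j
    fin_cases i <;> fin_cases j <;>
      simp [uu, Matrix.mul_apply, Fin.sum_univ_two] <;> ring

@[simp] lemma uHom_apply (a : Multiplicative F) : uHom a = uu (Multiplicative.toAdd a) := rfl

local notation "π" => QuotientGroup.mk' (Subgroup.center G0)

def qHom : Multiplicative F →* G0 ⧸ Subgroup.center G0 := (π).comp uHom

def Ubar : Subgroup (G0 ⧸ Subgroup.center G0) := (K : Subgroup G0).map π

lemma comap_Ubar : (Ubar (F := F)).comap π = K := by
  rw [Ubar, Subgroup.comap_map_eq, QuotientGroup.ker_mk', sup_of_le_left Z_le_K]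

lemma qHom_injective : Function.Injective (qHom (F := F)) := by
  rw [← MonoidHom.ker_eq_bot_iff, Subgroup.eq_bot_iff_forall]
  intro a ha
  rw [MonoidHom.mem_ker, qHom, MonoidHom.comp_apply, ← MonoidHom.mem_ker,
    QuotientGroup.ker_mk', center_eq] at ha
  obtain ⟨c, hc⟩ := ha
  rw [uHom_apply] at hc
  have h01 := congrFun (congrFun (congrArg (fun M : G0 => (M : Matrix (Fin 2) (Fin 2) F)) hc) 0) 1
  simp only [sHom_val, Matrix.scalar_apply, Matrix.diagonal, uu] at h01
  simp at h01
  have : a.toAdd = 0 := h01.symm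
  have := congrArg Multiplicative.ofAdd this
  simpa using this

lemma range_qHom : (qHom (F := F)).range = Ubar := by
  apply le_antisymm
  · rintro _ ⟨a, rfl⟩
    exact ⟨uu a.toAdd, uu_mem_K _, rfl⟩
  · rintro _ ⟨k, hk, rfl⟩
    obtain ⟨hk1, hk2⟩ := hk
    have hd : IsUnit ((k : R).det) := (Matrix.isUnit_iff_isUnit_det _).1 k.isUnit
    rw [Matrix.det_fin_two, hk1, mul_zero, sub_zero, hk2] at hd
    have hu : IsUnit ((k : R) 1 1) := isUnit_of_mul_isUnit_left hd
    set b := (k : R) 0 1 / (k : R) 1 1 with hb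
    refine ⟨Multiplicative.ofAdd b, ?_⟩
    have hkey : k = sHom hu.unit * uu ((k : R) 0 1 / (k : R) 1 1) := by
      apply Units.ext
      rw [Units.val_mul]
      ext i j
      fin_cases i <;> fin_cases j <;>
        simp [sHom_val, Matrix.scalar_apply, Matrix.diagonal, uu, Matrix.mul_apply,
          Fin.sum_univ_two, hk1, hk2]
      rw [mul_comm, div_mul_cancel₀ _ (IsUnit.ne_zero hu)]
    show π (uu b) = π k
    have : π (sHom hu.unit) = 1 := by
      rw [← MonoidHom.mem_ker, QuotientGroup.ker_mk', center_eq]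
      exact ⟨hu.unit, rfl⟩
    conv_rhs => rw [hkey]
    rw [_root_.map_mul, this, one_mul]

lemma K_comm (a b : G0) (ha : a ∈ (K : Subgroup G0)) (hb : b ∈ (K : Subgroup G0)) :
    a * b = b * a := by
  obtain ⟨ha1, ha2⟩ := ha; obtain ⟨hb1, hb2⟩ := hb
  apply Units.ext
  rw [Units.val_mul, Units.val_mul]
  ext i j
  fin_cases i <;> fin_cases j <;>
    simp [Matrix.mul_apply, Fin.sum_univ_two, ha1, hb1, ha2, hb2] <;> ring

lemma conj_mem_K {g h : G0} (hg : g ∈ (B : Subgroup G0)) (hh : h ∈ (K : Subgroup G0)) :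
    g * h * g⁻¹ ∈ (K : Subgroup G0) := by
  obtain ⟨hh1, hh2⟩ := hh
  have hg1 : (g : R) 1 0 = 0 := hg
  have hgv : ((g⁻¹ : G0) : R) = (g : R)⁻¹ := Matrix.coe_units_inv g
  constructor <;>
  · show ((g * h * g⁻¹ : G0) : R) _ _ = _
    rw [Units.val_mul, Units.val_mul, hgv, Matrix.inv_def, Matrix.adjugate_fin_two]
    simp [Matrix.mul_apply, Fin.sum_univ_two, hh1, hg1, hh2, Matrix.det_fin_two,
      Matrix.smul_apply]
    try ring

lemma normalizer_K : Subgroup.normalizer ((K : Subgroup G0) : Set G0) = B := by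
  apply le_antisymm
  · intro g hg
    have h1 := (Subgroup.mem_normalizer_iff.mp hg (uu 1)).mp (uu_mem_K 1)
    set v := g * uu 1 * g⁻¹ with hv
    obtain ⟨hv1, hv2⟩ := h1
    have hmul : v * g = g * uu 1 := by rw [hv]; group
    have hveq : (v : R) * (g : R) = (g : R) * (uu (1:F) : R) := by
      rw [← Units.val_mul, ← Units.val_mul, hmul]
    have e10 := congrFun (congrFun hveq 1) 0
    have e11 := congrFun (congrFun hveq 1) 1
    simp only [uu_val] at e10 e11
    simp [Matrix.mul_apply, Fin.sum_univ_two, hv1] at e10 e11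
    show (g : R) 1 0 = 0
    by_cases hc : (v : R) 1 1 = 1
    · rw [hc] at e11
      linear_combination -e11
    · have hz : (1 - (v : R) 1 1) * (g : R) 1 0 = 0 := by linear_combination -e10
      rcases mul_eq_zero.mp hz with h | h
      · exact absurd (by linear_combination -h) hc
      · exact h
  · intro g hg
    rw [Subgroup.mem_normalizer_iff]
    intro h
    constructor
    · exact fun hh => conj_mem_K hg hh
    · intro hh
      have h2 := conj_mem_K ((B : Subgroup G0).inv_mem hg) hh
      have : g⁻¹ * (g * h * g⁻¹) * g⁻¹⁻¹ = h := by group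
      rwa [this] at h2

local notation "GQ" => Matrix.GeneralLinearGroup (Fin 2) F ⧸
  Subgroup.center (Matrix.GeneralLinearGroup (Fin 2) F)

lemma pi_surjective : Function.Surjective (π) := QuotientGroup.mk'_surjective _

lemma centralizer_Ubar :
    Subgroup.centralizer ((Ubar (F := F) : Subgroup GQ) : Set GQ) = Ubar := by
  apply le_antisymm
  · intro x hx
    rw [Subgroup.mem_centralizer_iff] at hx
    obtain ⟨g, rfl⟩ := pi_surjective x
    have hcomm := hx (π (uu 1)) ⟨uu 1, uu_mem_K 1, rfl⟩
    rw [← _root_.map_mul, ← _root_.map_mul] at hcomm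
    have hmem : (uu 1 * g)⁻¹ * (g * uu 1) ∈ Subgroup.center G0 := by
      rw [← QuotientGroup.ker_mk' (Subgroup.center G0), MonoidHom.mem_ker, _root_.map_mul,
        map_inv, hcomm]
      group
    rw [center_eq] at hmem
    obtain ⟨c, hc⟩ := hmem
    have heq : uu 1 * g * sHom c = g * uu 1 := by rw [hc]; group
    have hveq : (uu (1:F) : R) * (g : R) * ((sHom c : G0) : R) = (g : R) * (uu (1:F) : R) := by
      rw [← Units.val_mul, ← Units.val_mul, ← Units.val_mul, heq]
    have e10 := congrFun (congrFun hveq 1) 0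
    have e11 := congrFun (congrFun hveq 1) 1
    have e01 := congrFun (congrFun hveq 0) 1
    simp only [uu_val, sHom_val] at e10 e11 e01
    simp [Matrix.mul_apply, Fin.sum_univ_two, Matrix.scalar_apply, Matrix.diagonal,
      Matrix.vecMul, dotProduct, Matrix.vecHead, Matrix.vecTail] at e10 e11 e01
    -- analysis
    have hg10 : (g : R) 1 0 = 0 := by
      by_cases hc1 : (c : F) = 1
      · rw [hc1] at e11
        linear_combination -e11
      · have hz : ((c : F) - 1) * (g : R) 1 0 = 0 := by linear_combination e10
        rcases mul_eq_zero.mp hz with h | h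
        · exact absurd (by linear_combination h) hc1
        · exact h
    have hd : IsUnit ((g : R).det) := (Matrix.isUnit_iff_isUnit_det _).1 g.isUnit
    rw [Matrix.det_fin_two, hg10, mul_zero, sub_zero] at hd
    have h11 : (g : R) 1 1 ≠ 0 := fun h => by simp [h] at hd
    have hc1 : (c : F) = 1 := by
      have : ((c : F) - 1) * (g : R) 1 1 = 0 := by linear_combination e11 + hg10
      rcases mul_eq_zero.mp this with h | h
      · linear_combination h
      · exact absurd h h11
    have hg00 : (g : R) 0 0 = (g : R) 1 1 := by
      rw [hc1] at e01
      linear_combination -e01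
    exact ⟨g, ⟨hg10, hg00⟩, rfl⟩
  · intro x hx
    rw [Subgroup.mem_centralizer_iff]
    rintro _ ⟨k, hk, rfl⟩
    obtain ⟨m, hm, rfl⟩ := hx
    rw [← _root_.map_mul, ← _root_.map_mul, K_comm k m hk hm]

lemma normalizer_Ubar :
    Subgroup.normalizer ((Ubar (F := F) : Subgroup GQ) : Set GQ) = (B : Subgroup G0).map π := by
  have hcomap : (Subgroup.normalizer ((Ubar (F := F) : Subgroup GQ) : Set GQ)).comap π = B := by
    rw [Subgroup.comap_normalizer_eq_of_surjective _ pi_surjective, comap_Ubar, normalizer_K]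
  rw [← hcomap, Subgroup.map_comap_eq_self_of_surjective pi_surjective]

lemma card_G0 (hF : Fintype.card F = 9) : Nat.card G0 = 5760 := by
  rw [Matrix.card_GL_field]
  norm_num [hF, Fin.prod_univ_two]

lemma card_center (hF : Fintype.card F = 9) :
    Nat.card (Subgroup.center G0) = 8 := by
  rw [center_eq]
  rw [Nat.card_congr (MonoidHom.ofInjective sHom_injective).toEquiv.symm, Nat.card_units,
    Nat.card_eq_fintype_card, hF]

lemma card_GQ (hF : Fintype.card F = 9) : Nat.card GQ = 720 := by
  have h := Subgroup.card_eq_card_quotient_mul_card_subgroup (Subgroup.center G0)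
  rw [card_G0 hF, card_center hF] at h
  omega

lemma card_Ubar (hF : Fintype.card F = 9) :
    Nat.card (Ubar (F := F) : Subgroup GQ) = 9 := by
  rw [← range_qHom, Nat.card_congr (MonoidHom.ofInjective qHom_injective).toEquiv.symm,
    Nat.card_congr Multiplicative.toAdd, Nat.card_eq_fintype_card, hF]

lemma B_unit_entries (M : G0) (h : M ∈ (B : Subgroup G0)) :
    IsUnit ((M : R) 0 0) ∧ IsUnit ((M : R) 1 1) := by
  have hd := (Matrix.isUnit_iff_isUnit_det _).1 M.isUnit
  have h10 : (M : R) 1 0 = 0 := h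
  rw [Matrix.det_fin_two, h10, mul_zero, sub_zero] at hd
  exact ⟨isUnit_of_mul_isUnit_left hd, isUnit_of_mul_isUnit_right hd⟩

noncomputable def deltaHom : ↥(B : Subgroup G0) →* Fˣ :=
  MonoidHom.mk'
    (fun M => ((B_unit_entries _ M.2).1.unit) * ((B_unit_entries _ M.2).2.unit)⁻¹)
    (by
      intro a b
      apply Units.ext
      have hmul : (((a * b : ↥(B : Subgroup G0)) : G0) : R) = ((a : G0) : R) * ((b : G0) : R) :=
        rfl
      have ha10 : ((a : G0) : R) 1 0 = 0 := a.2
      have hb10 : ((b : G0) : R) 1 0 = 0 := b.2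
      have e00 := congrFun (congrFun hmul 0) 0
      have e11 := congrFun (congrFun hmul 1) 1
      rw [Matrix.mul_apply, Fin.sum_univ_two] at e00 e11
      have ha11 : ((a : G0) : R) 1 1 ≠ 0 := ((B_unit_entries _ a.2).2).ne_zero
      have hb11 : ((b : G0) : R) 1 1 ≠ 0 := ((B_unit_entries _ b.2).2).ne_zero
      simp only [Units.val_mul, Units.val_inv_eq_inv_val, IsUnit.unit_spec]
      rw [e00, e11, ha10, hb10]
      field_simp
      try ring)

lemma deltaHom_ker : (deltaHom (F := F)).ker = (K : Subgroup G0).subgroupOf B := by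
  ext x
  rw [MonoidHom.mem_ker, Subgroup.mem_subgroupOf, mem_K]
  have hx10 : ((x : G0) : R) 1 0 = 0 := x.2
  have hx11 : ((x : G0) : R) 1 1 ≠ 0 := ((B_unit_entries _ x.2).2).ne_zero
  constructor
  · intro h
    have := congrArg Units.val h
    simp only [deltaHom, MonoidHom.mk'_apply, Units.val_mul, Units.val_inv_eq_inv_val,
      IsUnit.unit_spec, Units.val_one] at this
    refine ⟨hx10, ?_⟩
    field_simp at this
    exact this
  · rintro ⟨-, h2⟩
    apply Units.ext
    simp only [deltaHom, MonoidHom.mk'_apply, Units.val_mul, Units.val_inv_eq_inv_val,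
      IsUnit.unit_spec, Units.val_one]
    rw [h2]
    field_simp

def dd (t : Fˣ) : G0 :=
  ⟨!![(t : F), 0; 0, 1], !![((t⁻¹ : Fˣ) : F), 0; 0, 1],
   by ext i j; fin_cases i <;> fin_cases j <;>
      simp [Matrix.mul_apply, Fin.sum_univ_two, Matrix.one_apply],
   by ext i j; fin_cases i <;> fin_cases j <;>
      simp [Matrix.mul_apply, Fin.sum_univ_two, Matrix.one_apply]⟩

lemma deltaHom_surjective : Function.Surjective (deltaHom (F := F)) := by
  intro t
  have hmem : dd t ∈ (B : Subgroup G0) := by show ((dd t : G0) : R) 1 0 = 0; simp [dd]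
  refine ⟨⟨dd t, hmem⟩, ?_⟩
  apply Units.ext
  simp only [deltaHom, MonoidHom.mk'_apply, Units.val_mul, Units.val_inv_eq_inv_val,
    IsUnit.unit_spec]
  show ((dd t : G0) : R) 0 0 * (((dd t : G0) : R) 1 1)⁻¹ = (t : F)
  simp [dd]

noncomputable def automizerUbarEquiv :
    automizer (Ubar (F := F) : Subgroup GQ) ≃* Fˣ := by
  set NN := Subgroup.normalizer ((Ubar (F := F) : Subgroup GQ) : Set GQ) with hNN
  set SS := (Subgroup.centralizer ((Ubar (F := F) : Subgroup GQ) : Set GQ)).subgroupOf NN with hSS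
  have hmem : ∀ b : ↥(B : Subgroup G0), ((QuotientGroup.mk' (Subgroup.center G0)).comp
      (B : Subgroup G0).subtype) b ∈ NN := by
    intro b
    rw [hNN, normalizer_Ubar]
    exact ⟨b, b.2, rfl⟩
  set rho : ↥(B : Subgroup G0) →* ↥NN :=
    ((QuotientGroup.mk' (Subgroup.center G0)).comp (B : Subgroup G0).subtype).codRestrict NN hmem
    with hrho
  have rho_surj : Function.Surjective rho := by
    intro n
    have hn : (n : GQ) ∈ (B : Subgroup G0).map π := by
      rw [← normalizer_Ubar]; exact n.2
    obtain ⟨b, hb, hbn⟩ := hn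
    exact ⟨⟨b, hb⟩, Subtype.ext hbn⟩
  set Psi := (QuotientGroup.mk' SS).comp rho with hPsi
  have Psi_surj : Function.Surjective Psi :=
    (QuotientGroup.mk'_surjective SS).comp rho_surj
  have hker : Psi.ker = (deltaHom (F := F)).ker := by
    rw [deltaHom_ker]
    ext x
    rw [MonoidHom.mem_ker, hPsi, MonoidHom.comp_apply, ← MonoidHom.mem_ker,
      QuotientGroup.ker_mk', hSS, Subgroup.mem_subgroupOf, Subgroup.mem_subgroupOf]
    show (π (x : G0)) ∈ Subgroup.centralizer _ ↔ _
    rw [centralizer_Ubar]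
    change π (x : G0) ∈ Ubar ↔ _
    rw [← Subgroup.mem_comap, comap_Ubar]
  exact ((QuotientGroup.quotientKerEquivOfSurjective Psi Psi_surj).symm.trans
    (QuotientGroup.quotientMulEquivOfEq hker)).trans
    (QuotientGroup.quotientKerEquivOfSurjective _ deltaHom_surjective)

lemma char_three (hF : Fintype.card F = 9) : (3 : F) = 0 := by
  haveI := ringChar.charP F
  obtain ⟨n, hp, hn⟩ := FiniteField.card F (ringChar F)
  rw [hF] at hn
  have hdvd : ringChar F ∣ 9 := hn ▸ dvd_pow_self (ringChar F) n.ne_zero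
  have h9 : (9 : ℕ) = 3 ^ 2 := by norm_num
  have h3 : ringChar F = 3 :=
    (Nat.prime_dvd_prime_iff_eq hp (by norm_num)).mp (hp.dvd_of_dvd_pow (h9 ▸ hdvd))
  have := CharP.cast_eq_zero F (ringChar F)
  rw [h3] at this
  exact_mod_cast this

lemma addEquiv_F (hF : Fintype.card F = 9) : Nonempty (F ≃+ ZMod 3 × ZMod 3) := by
  have h3 : (3 : F) = 0 := char_three hF
  have hsm : ∀ x : F, 3 • x = 0 := fun x => by
    rw [nsmul_eq_mul, show ((3 : ℕ) : F) = (3 : F) by norm_cast, h3, zero_mul]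
  letI : Module (ZMod 3) F := AddCommGroup.zmodModule hsm
  haveI : Module.Finite (ZMod 3) F := Module.Finite.of_finite
  have hrank : Module.finrank (ZMod 3) F = 2 := by
    have hc := Module.card_eq_pow_finrank (K := ZMod 3) (V := F)
    rw [hF, ZMod.card] at hc
    have h2 : (3 : ℕ) ^ 2 = 3 ^ Module.finrank (ZMod 3) F := by rw [← hc]; norm_num
    have := Nat.pow_right_injective (by norm_num) h2
    omega
  have hrank2 : Module.finrank (ZMod 3) (ZMod 3 × ZMod 3) = 2 := by
    rw [Module.finrank_prod, Module.finrank_self]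
  obtain ⟨e⟩ := FiniteDimensional.nonempty_linearEquiv_of_finrank_eq
    (hrank.trans hrank2.symm)
  exact ⟨e.toAddEquiv⟩

lemma ubar_mulEquiv (hF : Fintype.card F = 9) :
    Nonempty (↥(Ubar (F := F) : Subgroup GQ) ≃*
      Multiplicative (ZMod 3) × Multiplicative (ZMod 3)) := by
  obtain ⟨e⟩ := addEquiv_F (F := F) hF
  exact ⟨(((MulEquiv.subgroupCongr (range_qHom (F := F)).symm).trans
      (MonoidHom.ofInjective qHom_injective).symm).trans
      (AddEquiv.toMultiplicative e)).trans (multProdEquiv _ _)⟩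

lemma units_mulEquiv (hF : Fintype.card F = 9) :
    Nonempty (Fˣ ≃* Multiplicative (ZMod 8)) := by
  have hcard : Nat.card Fˣ = 8 := by
    rw [Nat.card_units, Nat.card_eq_fintype_card, hF]
  have e8 : Multiplicative (ZMod (Nat.card Fˣ)) ≃* Fˣ :=
    zmodCyclicMulEquiv inferInstance
  rw [hcard] at e8
  exact ⟨e8.symm⟩

end PGL9

open PGL9 in

/-- If `G = PGL₂(F₉)` and `P` is a Sylow 3-subgroup of `G`, then `P ≅ C₃ × C₃` and the
automizer `N_G(P)/C_G(P)` is cyclic of order 8. -/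
theorem stmt_10 (F : Type) [Field F] [Fintype F] (hF : Fintype.card F = 9)
    (P : Sylow 3 (Matrix.GeneralLinearGroup (Fin 2) F ⧸
      Subgroup.center (Matrix.GeneralLinearGroup (Fin 2) F))) :
    Nonempty (↥(P : Subgroup (Matrix.GeneralLinearGroup (Fin 2) F ⧸
        Subgroup.center (Matrix.GeneralLinearGroup (Fin 2) F))) ≃*
      Multiplicative (ZMod 3) × Multiplicative (ZMod 3)) ∧
    Nonempty (automizer (P : Subgroup (Matrix.GeneralLinearGroup (Fin 2) F ⧸
        Subgroup.center (Matrix.GeneralLinearGroup (Fin 2) F))) ≃*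
      Multiplicative (ZMod 8)) := by
  haveI : Fact (Nat.Prime 3) := ⟨by norm_num⟩
  have hfact : (720 : ℕ).factorization 3 = 2 := by
    have hp3 : Nat.Prime 3 := by norm_num
    have hge : 2 ≤ (720 : ℕ).factorization 3 :=
      (Nat.Prime.pow_dvd_iff_le_factorization hp3 (by norm_num)).1 (by norm_num)
    have hle : (720 : ℕ).factorization 3 ≤ 2 := by
      by_contra hgt
      push_neg at hgt
      exact (by norm_num : ¬ (3:ℕ)^3 ∣ 720)
        ((Nat.Prime.pow_dvd_iff_le_factorization hp3 (by norm_num)).2 hgt)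
    omega
  have hcardeq : Nat.card ↥(Ubar (F := F)) =
      3 ^ ((Nat.card (Matrix.GeneralLinearGroup (Fin 2) F ⧸
        Subgroup.center (Matrix.GeneralLinearGroup (Fin 2) F))).factorization 3) := by
    rw [card_Ubar hF, card_GQ hF, hfact]; norm_num
  let SylU : Sylow 3 _ := Sylow.ofCard (Ubar (F := F)) hcardeq
  obtain ⟨g, hg⟩ := MulAction.exists_smul_eq (Matrix.GeneralLinearGroup (Fin 2) F ⧸
        Subgroup.center (Matrix.GeneralLinearGroup (Fin 2) F)) SylU P
  have hPcoe : (P : Subgroup _) = (Ubar (F := F)).map (MulAut.conj g).toMonoidHom := by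
    rw [← hg, Sylow.coe_subgroup_smul, ← Sylow.coe_ofCard (Ubar (F := F)) hcardeq,
      Subgroup.pointwise_smul_def]
    rfl
  constructor
  · obtain ⟨e⟩ := ubar_mulEquiv (F := F) hF
    refine ⟨?_⟩
    rw [hPcoe]
    exact ((MulEquiv.subgroupMap (MulAut.conj g) (Ubar (F := F))).symm).trans e
  · obtain ⟨e8⟩ := units_mulEquiv (F := F) hF
    refine ⟨?_⟩
    rw [hPcoe]
    exact ((automizerCongr (MulAut.conj g) (Ubar (F := F))).symm.trans
      (automizerUbarEquiv (F := F))).trans e8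
end

section
/- Let F8 be a finite field with 8 elements, let G = SL_2(F8) (which equals PSL_2(8)), and let P be a Sylow 2-subgroup of G. Then P is elementary abelian of order 8 (isomorphic to C2 × C2 × C2), the centralizer C_G(P) equals P, and the quotient N_G(P)/P of the normalizer of P by P is cyclic of order 7. -/
open Matrix

set_option linter.unusedSectionVars false

namespace Stmt16Aux

variable {F : Type} [Field F]

local notation "SL2" F => Matrix.SpecialLinearGroup (Fin 2) F

lemma det_entry (g : SL2 F) :
    g.1 0 0 * g.1 1 1 - g.1 0 1 * g.1 1 0 = 1 := by
  have := g.2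
  rwa [Matrix.det_fin_two] at this

lemma mul_entry (g h : SL2 F) (i j : Fin 2) :
    (g * h).1 i j = g.1 i 0 * h.1 0 j + g.1 i 1 * h.1 1 j := by
  simp [Matrix.SpecialLinearGroup.coe_mul, Matrix.mul_apply, Fin.sum_univ_two]

lemma inv_entry (g : SL2 F) :
    (g⁻¹).1 = !![g.1 1 1, -g.1 0 1; -g.1 1 0, g.1 0 0] := by
  rw [Matrix.SpecialLinearGroup.SL2_inv_expl]
  rfl

@[simp] lemma lit00 (a b c d : F) : (!![a,b;c,d] : Matrix (Fin 2) (Fin 2) F) 0 0 = a := rfl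
@[simp] lemma lit01 (a b c d : F) : (!![a,b;c,d] : Matrix (Fin 2) (Fin 2) F) 0 1 = b := rfl
@[simp] lemma lit10 (a b c d : F) : (!![a,b;c,d] : Matrix (Fin 2) (Fin 2) F) 1 0 = c := rfl
@[simp] lemma lit11 (a b c d : F) : (!![a,b;c,d] : Matrix (Fin 2) (Fin 2) F) 1 1 = d := rfl

/-- smart constructor -/
def mk' (a b c d : F) (h : a * d - b * c = 1) : SL2 F :=
  ⟨!![a, b; c, d], by rwa [Matrix.det_fin_two_of]⟩

@[simp] lemma mk'00 (a b c d : F) (h) : (mk' a b c d h).1 0 0 = a := rfl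
@[simp] lemma mk'01 (a b c d : F) (h) : (mk' a b c d h).1 0 1 = b := rfl
@[simp] lemma mk'10 (a b c d : F) (h) : (mk' a b c d h).1 1 0 = c := rfl
@[simp] lemma mk'11 (a b c d : F) (h) : (mk' a b c d h).1 1 1 = d := rfl

lemma sl_ext {g h : SL2 F} (h00 : g.1 0 0 = h.1 0 0) (h01 : g.1 0 1 = h.1 0 1)
    (h10 : g.1 1 0 = h.1 1 0) (h11 : g.1 1 1 = h.1 1 1) : g = h := by
  apply Subtype.ext
  ext i j
  fin_cases i <;> fin_cases j <;> assumption

/-- The unipotent upper-triangular subgroup. -/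
def U (F : Type) [Field F] : Subgroup (SL2 F) where
  carrier := {g | g.1 1 0 = 0 ∧ g.1 0 0 = 1}
  one_mem' := by constructor <;> simp
  mul_mem' := by
    rintro g h ⟨hg1, hg2⟩ ⟨hh1, hh2⟩
    constructor <;> rw [mul_entry] <;> simp_all
  inv_mem' := by
    rintro g ⟨hg1, hg2⟩
    have hd := det_entry g
    rw [hg1, hg2] at hd
    show (g⁻¹).1 1 0 = 0 ∧ (g⁻¹).1 0 0 = 1
    rw [inv_entry]
    have h11 : g.1 1 1 = 1 := by linear_combination hd
    constructor
    · simp [hg1]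
    · simp [h11]

/-- The Borel subgroup of upper-triangular matrices. -/
def B (F : Type) [Field F] : Subgroup (SL2 F) where
  carrier := {g | g.1 1 0 = 0}
  one_mem' := by simp
  mul_mem' := by
    intro g h hg hh
    simp only [Set.mem_setOf_eq] at *
    rw [mul_entry]; simp [hg, hh]
  inv_mem' := by
    intro g hg
    simp only [Set.mem_setOf_eq] at *
    show (g⁻¹).1 1 0 = 0
    rw [inv_entry]; simp [hg]

lemma mem_U_iff {g : SL2 F} : g ∈ U F ↔ g.1 1 0 = 0 ∧ g.1 0 0 = 1 := Iff.rfl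
lemma mem_B_iff {g : SL2 F} : g ∈ B F ↔ g.1 1 0 = 0 := Iff.rfl

lemma U_d11 {g : SL2 F} (hg : g ∈ U F) : g.1 1 1 = 1 := by
  have hd := det_entry g
  rw [hg.1, hg.2] at hd
  linear_combination hd

lemma charTwo [Fintype F] (hF : Fintype.card F = 8) : CharP F 2 := by
  have hp : (ringChar F).Prime := CharP.char_is_prime F (ringChar F)
  obtain ⟨n, hprime, hn⟩ := FiniteField.card F (ringChar F)
  rw [hF] at hn
  have hdvd : ringChar F ∣ 8 := hn ▸ dvd_pow_self (ringChar F) n.2.ne'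
  have h2 : ringChar F = 2 := by
    have h8 : (8:ℕ) = 2 ^ 3 := by norm_num
    rw [h8] at hdvd
    exact (Nat.prime_dvd_prime_iff_eq hp Nat.prime_two).mp (hp.dvd_of_dvd_pow hdvd)
  exact h2 ▸ ringChar.charP F

lemma two_eq_zero [Fintype F] (hF : Fintype.card F = 8) : (2 : F) = 0 := by
  haveI := charTwo hF
  have := CharP.cast_eq_zero F 2
  simpa using this

lemma sq_eq_one_iff [Fintype F] (hF : Fintype.card F = 8) {x : F} (h : x * x = 1) : x = 1 := by
  have h2 : (x + 1) * (x + 1) = 0 := by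
    linear_combination h + x * two_eq_zero hF + two_eq_zero hF
  have h3 := mul_self_eq_zero.mp h2
  linear_combination h3 - two_eq_zero hF + h3 - h3

lemma u0_mem : mk' (1:F) 1 0 1 (by ring) ∈ U F := ⟨rfl, rfl⟩

lemma conj_mem_U {b u : SL2 F} (hb : b ∈ B F) (hu : u ∈ U F) : b * u * b⁻¹ ∈ U F := by
  have hb' : b.1 1 0 = 0 := hb
  have hu1 : u.1 1 0 = 0 := hu.1
  have hu2 : u.1 0 0 = 1 := hu.2
  have hdb := det_entry b
  rw [hb'] at hdb
  constructor
  · show (b * u * b⁻¹).1 1 0 = 0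
    rw [mul_entry, mul_entry, mul_entry, inv_entry]
    simp only [lit00, lit01, lit10, lit11]
    rw [hb', hu1]; ring
  · show (b * u * b⁻¹).1 0 0 = 1
    rw [mul_entry, mul_entry, mul_entry, inv_entry]
    simp only [lit00, lit01, lit10, lit11]
    rw [hb', hu1, hu2]
    linear_combination hdb

lemma normalizer_U : Subgroup.normalizer ((U F : Subgroup (SL2 F)) : Set (SL2 F)) = B F := by
  ext g
  constructor
  · intro hg
    have h := (Subgroup.mem_normalizer_iff.mp hg (mk' (1:F) 1 0 1 (by ring))).mp u0_mem
    have h1 : (g * mk' (1:F) 1 0 1 (by ring) * g⁻¹).1 1 0 = 0 := h.1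
    rw [mul_entry, mul_entry, mul_entry, inv_entry] at h1
    simp only [lit00, lit01, lit10, lit11, mk'00, mk'01, mk'10, mk'11] at h1
    have hc2 : g.1 1 0 * g.1 1 0 = 0 := by linear_combination -h1
    exact mul_self_eq_zero.mp hc2
  · intro hg
    rw [Subgroup.mem_normalizer_iff]
    intro u
    constructor
    · exact fun hu => conj_mem_U hg hu
    · intro hu
      have := conj_mem_U ((B F).inv_mem hg) hu
      have he : g⁻¹ * (g * u * g⁻¹) * g⁻¹⁻¹ = u := by group
      rwa [he] at this

lemma centralizer_U [Fintype F] (hF : Fintype.card F = 8) :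
    Subgroup.centralizer ((U F : Subgroup (SL2 F)) : Set (SL2 F)) = U F := by
  ext g
  rw [Subgroup.mem_centralizer_iff]
  constructor
  · intro hg
    have h := hg (mk' (1:F) 1 0 1 (by ring)) u0_mem
    have e1 : (mk' (1:F) 1 0 1 (by ring) * g).1 0 0 = (g * mk' (1:F) 1 0 1 (by ring)).1 0 0 := by
      rw [h]
    have e2 : (mk' (1:F) 1 0 1 (by ring) * g).1 0 1 = (g * mk' (1:F) 1 0 1 (by ring)).1 0 1 := by
      rw [h]
    rw [mul_entry, mul_entry] at e1 e2
    simp only [mk'00, mk'01, mk'10, mk'11] at e1 e2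
    -- e1 : 1 * g00 + 1 * g10 = g00 * 1 + g01 * 0
    have hc : g.1 1 0 = 0 := by linear_combination e1
    have hd : g.1 1 1 = g.1 0 0 := by linear_combination e2
    have hdet := det_entry g
    rw [hc, hd] at hdet
    have h00 : g.1 0 0 = 1 := sq_eq_one_iff hF (by linear_combination hdet)
    exact ⟨hc, h00⟩
  · intro hg v hv
    have hv' : v ∈ U F := hv
    apply sl_ext <;> rw [mul_entry, mul_entry] <;>
      simp only [hg.1, hg.2, hv'.1, hv'.2, U_d11 hg, U_d11 hv'] <;> ring

/-! ### Cardinalities -/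

def UMulEquiv : (U F) ≃* Multiplicative F where
  toFun u := Multiplicative.ofAdd (u.1.1 0 1)
  invFun x := ⟨mk' 1 (Multiplicative.toAdd x) 0 1 (by ring), ⟨rfl, rfl⟩⟩
  left_inv u := by
    apply Subtype.ext
    apply sl_ext
    · exact u.2.2.symm
    · rfl
    · exact u.2.1.symm
    · exact (U_d11 u.2).symm
  right_inv x := rfl
  map_mul' u v := by
    have h : ((u * v : U F) : SL2 F).1 0 1 = (u : SL2 F).1 0 1 + (v : SL2 F).1 0 1 := by
      have hm : ((u * v : U F) : SL2 F) = (u : SL2 F) * (v : SL2 F) := rfl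
      rw [hm, mul_entry, u.2.2, U_d11 v.2]
      ring
    simp only [h, ofAdd_add]

def BEquivProd : (B F) ≃ Fˣ × F where
  toFun g :=
    (⟨g.1.1 0 0, g.1.1 1 1,
      by have := det_entry g.1; rw [g.2] at this; linear_combination this,
      by have := det_entry g.1; rw [g.2] at this; linear_combination this⟩,
     g.1.1 0 1)
  invFun x := ⟨mk' (x.1 : F) x.2 0 ((x.1⁻¹ : Fˣ) : F)
      (by have := Units.mul_inv x.1; linear_combination this), rfl⟩
  left_inv g := by
    apply Subtype.ext
    apply sl_ext
    · rfl
    · rfl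
    · exact g.2.symm
    · rfl
  right_inv x := by
    refine Prod.ext (Units.ext rfl) rfl

lemma card_U [Fintype F] (hF : Fintype.card F = 8) : Nat.card (U F) = 8 := by
  rw [Nat.card_congr (UMulEquiv (F := F)).toEquiv, Nat.card_eq_fintype_card]
  simpa using hF

lemma card_B [Fintype F] (hF : Fintype.card F = 8) : Nat.card (B F) = 56 := by
  rw [Nat.card_congr (BEquivProd (F := F))]
  have : Nat.card Fˣ = 7 := by
    rw [Nat.card_units, Nat.card_eq_fintype_card, hF]
  rw [Nat.card_prod, this, Nat.card_eq_fintype_card, hF]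

/-! ### The cardinality of `SL₂(F₈)` -/

def detSurjUnit (u : Fˣ) : GL (Fin 2) F :=
  ⟨!![u.val, 0; 0, 1], !![(u⁻¹ : Fˣ).val, 0; 0, 1],
    by
      ext i j
      rw [Matrix.mul_apply, Fin.sum_univ_two]
      fin_cases i <;> fin_cases j <;> simp,
    by
      ext i j
      rw [Matrix.mul_apply, Fin.sum_univ_two]
      fin_cases i <;> fin_cases j <;> simp⟩

lemma det_surjective : Function.Surjective (Matrix.GeneralLinearGroup.det :
    GL (Fin 2) F →* Fˣ) := by
  intro u
  refine ⟨detSurjUnit u, Units.ext ?_⟩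
  show Matrix.det !![u.val, 0; 0, 1] = u.val
  rw [Matrix.det_fin_two_of]
  ring

def kerEquivSL : (Matrix.SpecialLinearGroup (Fin 2) F) ≃*
    (Matrix.GeneralLinearGroup.det : GL (Fin 2) F →* Fˣ).ker where
  toFun S := ⟨Matrix.SpecialLinearGroup.toGL S, by
    rw [MonoidHom.mem_ker]
    exact Matrix.SpecialLinearGroup.coeToGL_det S⟩
  invFun M := ⟨(M.1 : Matrix (Fin 2) (Fin 2) F), by
    have := M.2
    rw [MonoidHom.mem_ker] at this
    have h := congrArg Units.val this
    exact h⟩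
  left_inv S := rfl
  right_inv M := by
    apply Subtype.ext
    apply Units.ext
    rfl
  map_mul' S T := by
    apply Subtype.ext
    apply Units.ext
    rfl

lemma card_SL2 [Fintype F] (hF : Fintype.card F = 8) :
    Nat.card (Matrix.SpecialLinearGroup (Fin 2) F) = 504 := by
  have hGL : Nat.card (GL (Fin 2) F) = 3528 := by
    rw [Matrix.card_GL_field]
    rw [Fin.prod_univ_two, hF]
    norm_num
  have hker := Subgroup.card_eq_card_quotient_mul_card_subgroup
    (Matrix.GeneralLinearGroup.det : GL (Fin 2) F →* Fˣ).ker
  have hquot : Nat.card ((GL (Fin 2) F) ⧸ (Matrix.GeneralLinearGroup.det :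
      GL (Fin 2) F →* Fˣ).ker) = 7 := by
    rw [Nat.card_congr (QuotientGroup.quotientKerEquivOfSurjective _ det_surjective).toEquiv]
    rw [Nat.card_units, Nat.card_eq_fintype_card, hF]
  have hkercard : Nat.card (Matrix.SpecialLinearGroup (Fin 2) F) =
      Nat.card ((Matrix.GeneralLinearGroup.det : GL (Fin 2) F →* Fˣ).ker) :=
    Nat.card_congr (kerEquivSL (F := F)).toEquiv
  rw [hGL, hquot, ← hkercard] at hker
  omega

/-! ### Transport under conjugation -/

lemma centralizer_map_mulEquiv {G : Type*} [Group G] (e : G ≃* G) (H : Subgroup G) :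
    Subgroup.centralizer ((H.map e.toMonoidHom : Subgroup G) : Set G) =
      (Subgroup.centralizer (H : Set G)).map e.toMonoidHom := by
  ext x
  simp only [Subgroup.mem_map, SetLike.mem_coe]
  constructor
  · intro hx
    refine ⟨e.symm x, ?_, by simp⟩
    rw [Subgroup.mem_centralizer_iff]
    intro h hh
    have hmem : e h ∈ ((H.map e.toMonoidHom : Subgroup G) : Set G) :=
      ⟨h, hh, rfl⟩
    have := Subgroup.mem_centralizer_iff.mp hx (e h) hmem
    have := congrArg e.symm this
    simpa using this
  · rintro ⟨y, hy, rfl⟩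
    rw [Subgroup.mem_centralizer_iff]
    rintro h ⟨k, hk, rfl⟩
    have := Subgroup.mem_centralizer_iff.mp hy k hk
    show e.toMonoidHom k * e.toMonoidHom y = e.toMonoidHom y * e.toMonoidHom k
    rw [← _root_.map_mul, this, _root_.map_mul]

/-! ### The additive group of `F` -/

def finThreeAddEquiv : (Fin 3 → ZMod 2) ≃+ ZMod 2 × ZMod 2 × ZMod 2 where
  toFun f := (f 0, f 1, f 2)
  invFun x := ![x.1, x.2.1, x.2.2]
  left_inv f := by
    funext i
    fin_cases i <;> rfl
  right_inv x := rfl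
  map_add' f g := rfl

lemma field_addEquiv [Fintype F] (hF : Fintype.card F = 8) :
    Nonempty (F ≃+ ZMod 2 × ZMod 2 × ZMod 2) := by
  haveI := charTwo hF
  haveI : Algebra (ZMod 2) F := ZMod.algebra F 2
  haveI : FiniteDimensional (ZMod 2) F := Module.Finite.of_finite
  have hcard := Module.card_eq_pow_finrank (K := ZMod 2) (V := F)
  rw [hF, ZMod.card] at hcard
  have hrank : Module.finrank (ZMod 2) F = 3 := by
    have h8 : (2:ℕ) ^ 3 = 2 ^ Module.finrank (ZMod 2) F := by omega
    exact (Nat.pow_right_injective (le_refl 2) h8).symm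
  have hrk2 : Module.finrank (ZMod 2) F = Module.finrank (ZMod 2) (Fin 3 → ZMod 2) := by
    rw [hrank, Module.finrank_fin_fun]
  exact ⟨((LinearEquiv.ofFinrankEq F (Fin 3 → ZMod 2) hrk2).toAddEquiv).trans finThreeAddEquiv⟩

end Stmt16Aux

open Stmt16Aux in
/-- Let `F` be a field with 8 elements, `G = SL₂(F) = PSL₂(8)`, and `P` a Sylow
2-subgroup of `G`.  Then `P` is elementary abelian of order 8 (isomorphic to
`C₂ × C₂ × C₂`), the centralizer of `P` in `G` equals `P`, and `N_G(P)/P` is cyclic of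
order 7. -/
theorem stmt_16 (F : Type) [Field F] [Fintype F] (hF : Fintype.card F = 8)
    (P : Sylow 2 (Matrix.SpecialLinearGroup (Fin 2) F)) :
    Nonempty (↥(P : Subgroup (Matrix.SpecialLinearGroup (Fin 2) F)) ≃*
      Multiplicative (ZMod 2) × Multiplicative (ZMod 2) × Multiplicative (ZMod 2)) ∧
    Subgroup.centralizer
        ((P : Subgroup (Matrix.SpecialLinearGroup (Fin 2) F)) :
          Set (Matrix.SpecialLinearGroup (Fin 2) F)) =
      (P : Subgroup (Matrix.SpecialLinearGroup (Fin 2) F)) ∧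
    Nonempty
      (((Subgroup.normalizer ((P : Subgroup (Matrix.SpecialLinearGroup (Fin 2) F)) :
            Set (Matrix.SpecialLinearGroup (Fin 2) F))) ⧸
          (P : Subgroup (Matrix.SpecialLinearGroup (Fin 2) F)).subgroupOf
            (Subgroup.normalizer ((P : Subgroup (Matrix.SpecialLinearGroup (Fin 2) F)) :
            Set (Matrix.SpecialLinearGroup (Fin 2) F)))) ≃*
        Multiplicative (ZMod 7)) := by
  classical
  set G := Matrix.SpecialLinearGroup (Fin 2) F with hG
  haveI : Fact (Nat.Prime 2) := ⟨Nat.prime_two⟩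
  have hcardG : Nat.card G = 504 := card_SL2 hF
  have hfact : (Nat.card G).factorization 2 = 3 := by
    rw [hcardG]
    have h504 : (504 : ℕ) = 2 ^ 3 * 63 := by norm_num
    rw [h504, Nat.factorization_mul (by norm_num) (by norm_num),
      Nat.Prime.factorization_pow Nat.prime_two, Finsupp.add_apply,
      Finsupp.single_eq_same, Nat.factorization_eq_zero_of_not_dvd (by norm_num)]
  let Us : Sylow 2 G := Sylow.ofCard (U F) (by rw [card_U hF, hfact]; norm_num)
  obtain ⟨g, hg⟩ := MulAction.exists_smul_eq G Us P
  have hPU : (P : Subgroup G) = (U F).map ((MulAut.conj g : G ≃* G)).toMonoidHom := by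
    rw [← hg]
    rfl
  -- Part 2 : centralizer
  have hcent : Subgroup.centralizer
      ((P : Subgroup G) : Set G) = (P : Subgroup G) := by
    rw [hPU, centralizer_map_mulEquiv, centralizer_U hF]
  -- Part 1
  obtain ⟨eF⟩ := field_addEquiv hF
  have part1 : Nonempty (↥(P : Subgroup G) ≃*
      Multiplicative (ZMod 2) × Multiplicative (ZMod 2) × Multiplicative (ZMod 2)) := by
    refine ⟨((MulEquiv.subgroupCongr hPU).trans
      (MulEquiv.subgroupMap (MulAut.conj g : G ≃* G) (U F)).symm).trans
      ((UMulEquiv.trans (AddEquiv.toMultiplicative eF)).trans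
        (MulEquiv.trans (MulEquiv.prodMultiplicative (ZMod 2) (ZMod 2 × ZMod 2))
          (MulEquiv.prodCongr (MulEquiv.refl _)
            (MulEquiv.prodMultiplicative (ZMod 2) (ZMod 2)))))⟩
  -- Part 3
  have hnorm : Subgroup.normalizer ((P : Subgroup G) : Set G)
      = (B F).map ((MulAut.conj g : G ≃* G)).toMonoidHom := by
    rw [hPU, ← Subgroup.map_normalizer_eq_of_bijective _ (MulAut.conj g : G ≃* G).bijective,
      normalizer_U]
  have hcardN : Nat.card (Subgroup.normalizer ((P : Subgroup G) : Set G)) = 56 := by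
    rw [hnorm]
    exact (Nat.card_congr
      (MulEquiv.subgroupMap (MulAut.conj g : G ≃* G) (B F)).toEquiv.symm).trans (card_B hF)
  have hcardP : Nat.card (P : Subgroup G) = 8 := by
    rw [hPU]
    exact (Nat.card_congr
      (MulEquiv.subgroupMap (MulAut.conj g : G ≃* G) (U F)).toEquiv.symm).trans (card_U hF)
  have hle : (P : Subgroup G) ≤ Subgroup.normalizer ((P : Subgroup G) : Set G) := Subgroup.le_normalizer
  have hcardK : Nat.card
      ((P : Subgroup G).subgroupOf (Subgroup.normalizer ((P : Subgroup G) : Set G))) = 8 := by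
    rw [Nat.card_congr (Subgroup.subgroupOfEquivOfLe hle).toEquiv]
    exact hcardP
  have hq := Subgroup.card_eq_card_quotient_mul_card_subgroup
    ((P : Subgroup G).subgroupOf (Subgroup.normalizer ((P : Subgroup G) : Set G)))
  rw [hcardN, hcardK] at hq
  have hquot7 : Nat.card (Subgroup.normalizer ((P : Subgroup G) : Set G) ⧸
      (P : Subgroup G).subgroupOf (Subgroup.normalizer ((P : Subgroup G) : Set G))) = 7 :=
    Nat.eq_of_mul_eq_mul_right (by norm_num : 0 < 8) (hq.symm.trans (by norm_num : (56:ℕ) = 7 * 8))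
  haveI : Fact (Nat.Prime 7) := ⟨by norm_num⟩
  have part3 : Nonempty ((Subgroup.normalizer ((P : Subgroup G) : Set G) ⧸
      (P : Subgroup G).subgroupOf (Subgroup.normalizer ((P : Subgroup G) : Set G))) ≃*
      Multiplicative (ZMod 7)) :=
    ⟨mulEquivOfPrimeCardEq hquot7 (by rw [Nat.card_eq_fintype_card]; simp)⟩
  exact ⟨part1, hcent, part3⟩
end
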